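/- Let w ∈ V⁺ be a nonempty finite word with LAR(w) = v_k v_{k−1} ⋯ v_1, and let F ⊆ V. Then Score_F(w) > 0 if and only if F = {v_1, …, v_i} for some i with 1 ≤ i ≤ k. -/

import Mathlib

variable {V : Type*}

/-- One step of the score/accumulator update: reading letter `v` after having
score/accumulator pair `s` for the set `F`. -/
def mgStep [DecidableEq V] (F : Finset V) (s : ℕ × Finset V) (v : V) : ℕ × Finset V :=
  if v ∈ F then
    if s.2 = F.erase v then (s.1 + 1, (∅ : Finset V)) else (s.1, insert v s.2)
  else (0, (∅ : Finset V))

/-- `scoreAcc F w = (Score_F(w), Acc_F(w))` for a (nonempty) finite word `w`. -/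
def scoreAcc [DecidableEq V] (F : Finset V) (w : List V) : ℕ × Finset V :=
  w.foldl (mgStep F) (0, ∅)

variable {V : Type*}

/-- One step of the latest-appearance-record update. -/
def larStep [DecidableEq V] (ℓ : List V) (v : V) : List V := ℓ.erase v ++ [v]

/-- The latest appearance record `LAR(w)` of a finite word. -/
def LARof [DecidableEq V] (w : List V) : List V := w.foldl larStep []

lemma scoreAcc_concat [DecidableEq V] (F : Finset V) (u : List V) (v : V) :
    scoreAcc F (u ++ [v]) = mgStep F (scoreAcc F u) v := by
  simp [scoreAcc, List.foldl_append]

lemma LARof_concat [DecidableEq V] (u : List V) (v : V) :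
    LARof (u ++ [v]) = (LARof u).erase v ++ [v] := by
  simp [LARof, List.foldl_append, larStep]

lemma LARof_nodup [DecidableEq V] (u : List V) : (LARof u).Nodup := by
  induction u using List.reverseRecOn with
  | nil => simp [LARof]
  | append_singleton u v ih =>
    rw [LARof_concat]
    refine List.Nodup.append (ih.erase v) (List.nodup_singleton v) ?_
    intro a ha hb
    simp at hb; subst hb
    exact (List.Nodup.not_mem_erase ih) ha

lemma acc_sub [DecidableEq V] (F : Finset V) (hF : F.Nonempty) (u : List V) :
    (scoreAcc F u).2 ⊆ F ∧ (scoreAcc F u).2 ≠ F := by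
  induction u using List.reverseRecOn with
  | nil =>
    constructor
    · simp [scoreAcc]
    · simp [scoreAcc]; exact fun h => hF.ne_empty h.symm
  | append_singleton u v ih =>
    rw [scoreAcc_concat, mgStep]
    by_cases hv : v ∈ F
    · simp only [hv, if_true]
      by_cases hacc : (scoreAcc F u).2 = F.erase v
      · simp only [hacc, if_true]
        exact ⟨by simp, fun h => hF.ne_empty h.symm⟩
      · simp only [hacc, if_false]
        refine ⟨Finset.insert_subset hv ih.1, ?_⟩
        intro h
        by_cases hvA : v ∈ (scoreAcc F u).2
        · rw [Finset.insert_eq_self.mpr hvA] at h; exact ih.2 h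
        · apply hacc
          apply Finset.Subset.antisymm
          · intro x hx
            exact Finset.mem_erase.mpr ⟨fun e => hvA (e ▸ hx), ih.1 hx⟩
          · intro x hx
            rw [Finset.mem_erase] at hx
            have hxF : x ∈ insert v (scoreAcc F u).2 := h.symm ▸ hx.2
            rcases Finset.mem_insert.mp hxF with h1 | h1
            · exact absurd h1 hx.1
            · exact h1
    · simp only [hv, if_false]
      exact ⟨Finset.empty_subset F, fun h => hF.ne_empty h.symm⟩

lemma filter_erase [DecidableEq V] (ℓ : List V) (hn : ℓ.Nodup) (v : V) (D : Finset V) :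
    (ℓ.erase v).filter (fun x => x ∉ D) = ℓ.filter (fun x => x ∉ insert v D) := by
  rw [hn.erase_eq_filter, List.filter_filter]
  exact List.filter_congr (fun x _ => by
    by_cases hx : x ∈ D <;> by_cases hxv : x = v <;> simp [hx, hxv, Finset.mem_insert])

lemma key [DecidableEq V] (u : List V) : ∀ (F D : Finset V), D ⊆ F →
    ((0 < (scoreAcc F u).1 ∨ (D.Nonempty ∧ F \ D ⊆ (scoreAcc F u).2)) ↔
      ∃ t, t <:+ (LARof u).filter (fun x => x ∉ D) ∧ F \ D = t.toFinset ∧ (D = ∅ → t ≠ [])) := by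
  induction u using List.reverseRecOn with
  | nil =>
    intro F D hDF
    simp only [scoreAcc, List.foldl_nil, LARof, List.filter_nil, List.suffix_nil,
      Nat.lt_irrefl, false_or]
    constructor
    · rintro ⟨hD, hsub⟩
      have h1 : F \ D = ∅ := Finset.subset_empty.mp hsub
      exact ⟨[], rfl, by simpa using h1, fun h => absurd h hD.ne_empty⟩
    · rintro ⟨t, rfl, hFD, hne⟩
      refine ⟨Finset.nonempty_iff_ne_empty.mpr (fun h => hne h rfl), by simp [hFD]⟩
  | append_singleton u v ih =>
    intro F D hDF
    rw [scoreAcc_concat, LARof_concat]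
    by_cases hvF : v ∈ F
    · -- v ∈ F
      have hFne : F.Nonempty := ⟨v, hvF⟩
      obtain ⟨hacc1, hacc2⟩ := acc_sub F hFne u
      have hD2F : insert v D ⊆ F := Finset.insert_subset hvF hDF
      have L1 : (0 < (mgStep F (scoreAcc F u) v).1 ∨
          (D.Nonempty ∧ F \ D ⊆ (mgStep F (scoreAcc F u) v).2)) ↔
          (0 < (scoreAcc F u).1 ∨
            ((insert v D).Nonempty ∧ F \ insert v D ⊆ (scoreAcc F u).2)) := by
        unfold mgStep
        by_cases hacc : (scoreAcc F u).2 = F.erase v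
        · simp only [if_pos hvF, if_pos hacc]
          constructor
          · intro _
            refine Or.inr ⟨Finset.insert_nonempty _ _, ?_⟩
            rw [hacc]
            intro x hx
            rw [Finset.mem_sdiff, Finset.mem_insert] at hx
            exact Finset.mem_erase.mpr ⟨fun h => hx.2 (Or.inl h), hx.1⟩
          · intro _
            exact Or.inl (Nat.succ_pos _)
        · simp only [if_pos hvF, if_neg hacc]
          constructor
          · rintro (h | ⟨hD, hsub⟩)
            · exact Or.inl h
            · refine Or.inr ⟨Finset.insert_nonempty _ _, ?_⟩
              intro x hx
              rw [Finset.mem_sdiff, Finset.mem_insert] at hx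
              have hx2 : x ∈ F \ D := Finset.mem_sdiff.mpr ⟨hx.1, fun h => hx.2 (Or.inr h)⟩
              rcases Finset.mem_insert.mp (hsub hx2) with h1 | h1
              · exact absurd h1 (fun h => hx.2 (Or.inl h))
              · exact h1
          · rintro (h | ⟨-, hsub⟩)
            · exact Or.inl h
            · rcases D.eq_empty_or_nonempty with rfl | hD
              · exfalso
                apply hacc
                by_cases hvs : v ∈ (scoreAcc F u).2
                · exfalso
                  apply hacc2
                  refine Finset.Subset.antisymm hacc1 (fun x hxF => ?_)
                  by_cases hxv : x = v
                  · exact hxv ▸ hvs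
                  · exact hsub (Finset.mem_sdiff.mpr ⟨hxF, by simp [hxv]⟩)
                · refine Finset.Subset.antisymm ?_ ?_
                  · intro x hx
                    exact Finset.mem_erase.mpr ⟨fun h => hvs (h ▸ hx), hacc1 hx⟩
                  · intro x hx
                    rw [Finset.mem_erase] at hx
                    exact hsub (Finset.mem_sdiff.mpr ⟨hx.2, by simp [hx.1]⟩)
              · refine Or.inr ⟨hD, fun x hx => ?_⟩
                rw [Finset.mem_sdiff] at hx
                by_cases hxv : x = v
                · exact Finset.mem_insert.mpr (Or.inl hxv)
                · exact Finset.mem_insert_of_mem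
                    (hsub (Finset.mem_sdiff.mpr ⟨hx.1, by simp [hxv, hx.2]⟩))
      rw [L1, ih F (insert v D) hD2F]
      by_cases hvD : v ∈ D
      · rw [Finset.insert_eq_self.mpr hvD]
        rw [List.filter_append, filter_erase _ (LARof_nodup u) v D,
          Finset.insert_eq_self.mpr hvD]
        simp [hvD]
      · -- v ∉ D
        have hlist : ((LARof u).erase v ++ [v]).filter (fun x => x ∉ D) =
            ((LARof u).filter (fun x => x ∉ insert v D)) ++ [v] := by
          rw [List.filter_append, filter_erase _ (LARof_nodup u) v D]
          simp [hvD]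
        rw [hlist]
        have hvM : v ∉ (LARof u).filter (fun x => x ∉ insert v D) := by
          intro h
          have := (List.mem_filter.mp h).2
          simp at this
        have hD2ne : insert v D ≠ ∅ := Finset.insert_ne_empty _ _
        have hsplit : F \ D = insert v (F \ insert v D) := by
          ext x
          simp only [Finset.mem_sdiff, Finset.mem_insert]
          constructor
          · rintro ⟨hxF, hxD⟩
            by_cases hxv : x = v
            · exact Or.inl hxv
            · exact Or.inr ⟨hxF, fun h => h.elim hxv hxD⟩
          · rintro (rfl | ⟨hxF, hxD⟩)
            · exact ⟨hvF, hvD⟩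
            · exact ⟨hxF, fun h => hxD (Or.inr h)⟩
        constructor
        · rintro ⟨t, ht, hft, -⟩
          refine ⟨t ++ [v], List.suffix_concat_iff.mpr (Or.inr ⟨t, rfl, ht⟩), ?_, by simp⟩
          rw [List.toFinset_append, hsplit, hft]
          ext x; simp [or_comm]
        · rintro ⟨t, ht, hft, hne⟩
          rcases List.suffix_concat_iff.mp ht with rfl | ⟨t', rfl, ht'⟩
          · exfalso
            simp only [List.toFinset_nil] at hft
            have : F ⊆ D := Finset.sdiff_eq_empty_iff_subset.mp hft
            exact hvD (this hvF)
          · have hvt' : v ∉ t' := fun h => hvM (ht'.subset h)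
            refine ⟨t', ht', ?_, fun h => absurd h hD2ne⟩
            rw [List.toFinset_append] at hft
            ext x
            simp only [Finset.mem_sdiff, Finset.mem_insert]
            constructor
            · rintro ⟨hxF, hxD⟩
              have : x ∈ F \ D := Finset.mem_sdiff.mpr ⟨hxF, fun h => hxD (Or.inr h)⟩
              rw [hft] at this
              rcases Finset.mem_union.mp this with h1 | h1
              · exact h1
              · exfalso; exact hxD (Or.inl (by simpa using h1))
            · intro hxt
              have hxv : x ≠ v := fun h => hvt' (h ▸ List.mem_toFinset.mp hxt)
              have : x ∈ F \ D := by
                rw [hft]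
                exact Finset.mem_union_left _ hxt
              rw [Finset.mem_sdiff] at this
              exact ⟨this.1, fun h => h.elim hxv this.2⟩
    · -- v ∉ F
      have hvD : v ∉ D := fun h => hvF (hDF h)
      simp only [mgStep, if_neg hvF]
      have hlist : ((LARof u).erase v ++ [v]).filter (fun x => x ∉ D) =
          (((LARof u).erase v).filter (fun x => x ∉ D)) ++ [v] := by
        simp [hvD]
      rw [hlist]
      constructor
      · rintro (h | ⟨hD, hsub⟩)
        · exact absurd h (by simp)
        · refine ⟨[], List.nil_suffix, ?_, fun h => absurd h hD.ne_empty⟩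
          simpa using Finset.subset_empty.mp hsub
      · rintro ⟨t, ht, hft, hne⟩
        rcases List.suffix_concat_iff.mp ht with rfl | ⟨t', rfl, ht'⟩
        · refine Or.inr ⟨Finset.nonempty_iff_ne_empty.mpr (fun h => hne h rfl), ?_⟩
          simp only [List.toFinset_nil] at hft
          simp [hft]
        · exfalso
          have hv : v ∈ F \ D := by rw [hft]; simp
          exact hvF (Finset.mem_sdiff.mp hv).1

/-- If `LAR(w) = v_k ⋯ v_1`, then `Score_F(w) > 0` iff
`F = {v_1, …, v_i}` for some `1 ≤ i ≤ k`. (Here `{v_1, …, v_i}` is the set of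
letters of the suffix of length `i` of `LAR w`.) -/
theorem score_pos_iff_lar_suffix [DecidableEq V] (w : List V) (hw : w ≠ [])
    (F : Finset V) :
    0 < (scoreAcc F w).1 ↔
      ∃ i, 1 ≤ i ∧ i ≤ (LARof w).length ∧
        F = ((LARof w).drop ((LARof w).length - i)).toFinset := by
  have h := key w F ∅ (Finset.empty_subset F)
  simp only [Finset.sdiff_empty, Finset.not_nonempty_empty, false_and, or_false,
    Finset.notMem_empty, not_false_iff, decide_true, List.filter_true,
    eq_self_iff_true, forall_true_left] at h
  rw [h]
  constructor
  · rintro ⟨t, ht, rfl, hne⟩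
    have htne : t ≠ [] := hne
    refine ⟨t.length, ?_, ht.length_le, ?_⟩
    · exact List.length_pos_iff.mpr htne
    · rw [← List.suffix_iff_eq_drop.mp ht]
  · rintro ⟨i, h1, h2, rfl⟩
    refine ⟨_, List.drop_suffix _ _, rfl, ?_⟩
    have hlen : ((LARof w).drop ((LARof w).length - i)).length = i := by
      rw [List.length_drop]; omega
    intro hcon
    rw [hcon] at hlen
    simp at hlen
    omega
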